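/- Let c > 0 be a real number and let A, B, E, F, L : [−π, π] → ℂ be continuous functions. Let Θ be the set of continuous functions Q : [−π, π] → ℂ such that (1/(2π))·∫_{−π}^{π} |E(ω)Q(ω) + F(ω)|² dω < c. Then Θ is a convex subset of the real vector space of continuous complex-valued functions on [−π, π], and the functional φ(Q) = (1/(2π))·∫_{−π}^{π} |L(ω) + A(ω)Q(ω) + B(ω)|² dω + ((1/(2π))·∫_{−π}^{π} |A(ω)Q(ω) + B(ω)|·|E(ω)Q(ω) + F(ω)| dω)² / (c − (1/(2π))·∫_{−π}^{π} |E(ω)Q(ω) + F(ω)|² dω) is convex on Θ. -/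

import Mathlib

open Real

lemma sq_split (θ τ a b : ℝ) (hθ : 0 ≤ θ) (hτ : 0 ≤ τ) (hθτ : θ + τ = 1) :
    (θ*a + τ*b)^2 ≤ θ*a^2 + τ*b^2 := by
  nlinarith [sq_nonneg (a - b), mul_nonneg hθ hτ]

lemma abs_combo_le (θ τ : ℝ) (hθ : 0 ≤ θ) (hτ : 0 ≤ τ) (z₀ z₁ : ℂ) :
    ‖(θ:ℂ) * z₀ + (τ:ℂ) * z₁‖ ≤ θ * ‖z₀‖ + τ * ‖z₁‖ := by
  calc ‖(θ:ℂ) * z₀ + (τ:ℂ) * z₁‖ ≤ ‖(θ:ℂ)*z₀‖ + ‖(τ:ℂ)*z₁‖ :=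
        norm_add_le _ _
    _ = θ * ‖z₀‖ + τ * ‖z₁‖ := by
        simp [map_mul, Complex.norm_real, abs_of_nonneg hθ, abs_of_nonneg hτ]

lemma wpt (θ τ : ℝ) (hθ : 0 ≤ θ) (hτ : 0 ≤ τ) (hθτ : θ + τ = 1) (e f q₀ q₁ : ℂ) :
    ‖e*((θ:ℂ)*q₀+(τ:ℂ)*q₁)+f‖^2
      ≤ θ*‖e*q₀+f‖^2 + τ*‖e*q₁+f‖^2 := by
  have hc : (θ:ℂ) + (τ:ℂ) = 1 := by exact_mod_cast hθτ
  have hw : e*((θ:ℂ)*q₀+(τ:ℂ)*q₁)+f = (θ:ℂ)*(e*q₀+f)+(τ:ℂ)*(e*q₁+f) := by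
    linear_combination (-f) * hc
  rw [hw]
  calc ‖(θ:ℂ)*(e*q₀+f)+(τ:ℂ)*(e*q₁+f)‖^2
      ≤ (θ*‖e*q₀+f‖ + τ*‖e*q₁+f‖)^2 :=
        pow_le_pow_left₀ (norm_nonneg _) (abs_combo_le θ τ hθ hτ _ _) 2
    _ ≤ θ*‖e*q₀+f‖^2 + τ*‖e*q₁+f‖^2 :=
        sq_split θ τ _ _ hθ hτ hθτ

lemma real_ineq (θ τ lam p s₀ s₁ sθ t₀ t₁ tθ r₀ r₁ : ℝ)
    (hθ : 0 ≤ θ) (hτ : 0 ≤ τ) (hθτ : θ + τ = 1) (hlam : 0 ≤ lam)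
    (hsθ : 0 ≤ sθ) (htθ : 0 ≤ tθ)
    (hs : sθ ≤ θ*s₀ + τ*s₁) (ht : tθ ≤ θ*t₀ + τ*t₁) :
    p^2 + sθ^2 + 2*(θ*r₀ + τ*r₁) + 2*lam*(sθ*tθ) + lam^2*tθ^2
      ≤ θ*(p^2 + s₀^2 + 2*r₀ + 2*lam*(s₀*t₀) + lam^2*t₀^2)
        + τ*(p^2 + s₁^2 + 2*r₁ + 2*lam*(s₁*t₁) + lam^2*t₁^2) := by
  have key : sθ + lam * tθ ≤ θ*(s₀ + lam*t₀) + τ*(s₁ + lam*t₁) := by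
    have := mul_le_mul_of_nonneg_left ht hlam
    nlinarith
  have key2 : (sθ + lam*tθ)^2 ≤ (θ*(s₀ + lam*t₀) + τ*(s₁ + lam*t₁))^2 :=
    pow_le_pow_left₀ (by positivity) key 2
  have key3 : (θ*(s₀ + lam*t₀) + τ*(s₁ + lam*t₁))^2 ≤ θ*(s₀+lam*t₀)^2 + τ*(s₁+lam*t₁)^2 := by
    nlinarith [sq_nonneg ((s₀+lam*t₀) - (s₁+lam*t₁)), mul_nonneg hθ hτ]
  nlinarith [key2, key3]

lemma re_combo (θ τ : ℝ) (l z₀ z₁ : ℂ) :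
    (l * (starRingEnd ℂ) ((θ:ℂ) * z₀ + (τ:ℂ) * z₁)).re
      = θ * (l * (starRingEnd ℂ) z₀).re + τ * (l * (starRingEnd ℂ) z₁).re := by
  rw [map_add, map_mul, map_mul, Complex.conj_ofReal, Complex.conj_ofReal, mul_add]
  rw [Complex.add_re, show l * ((θ:ℂ) * (starRingEnd ℂ) z₀) = (θ:ℂ) * (l * (starRingEnd ℂ) z₀) by ring,
    show l * ((τ:ℂ) * (starRingEnd ℂ) z₁) = (τ:ℂ) * (l * (starRingEnd ℂ) z₁) by ring,
    Complex.re_ofReal_mul, Complex.re_ofReal_mul]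

lemma ptwise (θ τ lam : ℝ) (hθ : 0 ≤ θ) (hτ : 0 ≤ τ) (hθτ : θ + τ = 1) (hlam : 0 ≤ lam)
    (l z₀ z₁ w₀ w₁ : ℂ) :
    ‖l + ((θ:ℂ)*z₀ + (τ:ℂ)*z₁)‖ ^ 2
      + 2*lam*(‖(θ:ℂ)*z₀+(τ:ℂ)*z₁‖ * ‖(θ:ℂ)*w₀+(τ:ℂ)*w₁‖)
      + lam^2 * ‖(θ:ℂ)*w₀+(τ:ℂ)*w₁‖^2
    ≤ θ*(‖l+z₀‖^2 + 2*lam*(‖z₀‖ * ‖w₀‖) + lam^2*‖w₀‖^2)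
      + τ*(‖l+z₁‖^2 + 2*lam*(‖z₁‖ * ‖w₁‖) + lam^2*‖w₁‖^2) := by
  have e0 : ‖l + z₀‖ ^ 2 = ‖l‖ ^ 2 + ‖z₀‖ ^ 2 + 2 * (l * (starRingEnd ℂ) z₀).re := by
    rw [Complex.sq_norm, Complex.sq_norm, Complex.sq_norm, Complex.normSq_add]
  have e1 : ‖l + z₁‖ ^ 2 = ‖l‖ ^ 2 + ‖z₁‖ ^ 2 + 2 * (l * (starRingEnd ℂ) z₁).re := by
    rw [Complex.sq_norm, Complex.sq_norm, Complex.sq_norm, Complex.normSq_add]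
  have eθ : ‖l + ((θ:ℂ)*z₀ + (τ:ℂ)*z₁)‖ ^ 2
      = ‖l‖ ^ 2 + ‖(θ:ℂ)*z₀ + (τ:ℂ)*z₁‖ ^ 2
        + 2 * (l * (starRingEnd ℂ) ((θ:ℂ)*z₀ + (τ:ℂ)*z₁)).re := by
    rw [Complex.sq_norm, Complex.sq_norm, Complex.sq_norm, Complex.normSq_add]
  rw [e0, e1, eθ, re_combo θ τ l z₀ z₁]
  exact real_ineq θ τ lam (‖l‖) (‖z₀‖) (‖z₁‖)
    (‖(θ:ℂ)*z₀ + (τ:ℂ)*z₁‖) (‖w₀‖) (‖w₁‖)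
    (‖(θ:ℂ)*w₀ + (τ:ℂ)*w₁‖) _ _ hθ hτ hθτ hlam
    (norm_nonneg _) (norm_nonneg _)
    (abs_combo_le θ τ hθ hτ z₀ z₁) (abs_combo_le θ τ hθ hτ w₀ w₁)

lemma ptwise' (θ τ lam : ℝ) (hθ : 0 ≤ θ) (hτ : 0 ≤ τ) (hθτ : θ + τ = 1) (hlam : 0 ≤ lam)
    (a b e f l q₀ q₁ : ℂ) :
    ‖l + a*((θ:ℂ)*q₀+(τ:ℂ)*q₁) + b‖^2
      + 2*lam*(‖a*((θ:ℂ)*q₀+(τ:ℂ)*q₁)+b‖ * ‖e*((θ:ℂ)*q₀+(τ:ℂ)*q₁)+f‖)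
      + lam^2*‖e*((θ:ℂ)*q₀+(τ:ℂ)*q₁)+f‖^2
    ≤ θ*(‖l + a*q₀ + b‖^2 + 2*lam*(‖a*q₀+b‖ * ‖e*q₀+f‖)
          + lam^2*‖e*q₀+f‖^2)
      + τ*(‖l + a*q₁ + b‖^2 + 2*lam*(‖a*q₁+b‖ * ‖e*q₁+f‖)
          + lam^2*‖e*q₁+f‖^2) := by
  have hc : (θ:ℂ) + (τ:ℂ) = 1 := by exact_mod_cast hθτ
  have hz : a*((θ:ℂ)*q₀+(τ:ℂ)*q₁)+b = (θ:ℂ)*(a*q₀+b)+(τ:ℂ)*(a*q₁+b) := by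
    linear_combination (-b) * hc
  have hw : e*((θ:ℂ)*q₀+(τ:ℂ)*q₁)+f = (θ:ℂ)*(e*q₀+f)+(τ:ℂ)*(e*q₁+f) := by
    linear_combination (-f) * hc
  have hlz : l + a*((θ:ℂ)*q₀+(τ:ℂ)*q₁) + b = l + ((θ:ℂ)*(a*q₀+b)+(τ:ℂ)*(a*q₁+b)) := by
    linear_combination (-b) * hc
  have hl0 : l + a*q₀ + b = l + (a*q₀+b) := by ring
  have hl1 : l + a*q₁ + b = l + (a*q₁+b) := by ring
  rw [hz, hw, hlz, hl0, hl1]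
  exact ptwise θ τ lam hθ hτ hθτ hlam l (a*q₀+b) (a*q₁+b) (e*q₀+f) (e*q₁+f)

lemma II {g : ℝ → ℝ} (hg : ContinuousOn g (Set.Icc (-π) π)) :
    IntervalIntegrable g MeasureTheory.volume (-π) π :=
  ContinuousOn.intervalIntegrable (by rwa [Set.uIcc_of_le (by linarith [pi_pos] : -π ≤ π)])

lemma combine (c θ τ Iθp Iθa Iθe I₀p I₀a I₀e I₁p I₁a I₁e k : ℝ)
    (hk : 0 < k) (hθ : 0 ≤ θ) (hτ : 0 ≤ τ) (hθτ : θ + τ = 1)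
    (haθ : 0 ≤ Iθa) (he₀ : k*I₀e < c) (he₁ : k*I₁e < c) (heθ : k*Iθe < c)
    (H : ∀ lam : ℝ, 0 ≤ lam →
      Iθp + 2*lam*Iθa + lam^2*Iθe
        ≤ θ*(I₀p + 2*lam*I₀a + lam^2*I₀e) + τ*(I₁p + 2*lam*I₁a + lam^2*I₁e)) :
    k*Iθp + (k*Iθa)^2/(c - k*Iθe)
      ≤ θ*(k*I₀p + (k*I₀a)^2/(c - k*I₀e)) + τ*(k*I₁p + (k*I₁a)^2/(c - k*I₁e)) := by
  have hceθ : 0 < c - k*Iθe := by linarith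
  set lam := (k*Iθa)/(c - k*Iθe) with hlam_def
  have hlam : 0 ≤ lam := div_nonneg (mul_nonneg hk.le haθ) hceθ.le
  have key1 : (k*Iθa)^2/(c - k*Iθe) = 2*lam*(k*Iθa) - lam^2*(c - k*Iθe) := by
    rw [hlam_def]; field_simp; ring
  have key2 : ∀ (Ia Ie : ℝ), k*Ie < c →
      2*lam*(k*Ia) - lam^2*(c - k*Ie) ≤ (k*Ia)^2/(c - k*Ie) := by
    intro Ia Ie hIe
    have hs : 0 < c - k*Ie := by linarith
    have hid : (k*Ia)^2/(c - k*Ie) - (2*lam*(k*Ia) - lam^2*(c - k*Ie))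
        = (k*Ia - lam*(c - k*Ie))^2/(c - k*Ie) := by field_simp; ring
    nlinarith [div_nonneg (sq_nonneg (k*Ia - lam*(c - k*Ie))) hs.le]
  have Hk : k*Iθp + 2*lam*(k*Iθa) + lam^2*(k*Iθe)
      ≤ θ*(k*I₀p + 2*lam*(k*I₀a) + lam^2*(k*I₀e))
        + τ*(k*I₁p + 2*lam*(k*I₁a) + lam^2*(k*I₁e)) := by
    have h := mul_le_mul_of_nonneg_left (H lam hlam) hk.le
    calc k*Iθp + 2*lam*(k*Iθa) + lam^2*(k*Iθe)
        = k*(Iθp + 2*lam*Iθa + lam^2*Iθe) := by ring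
      _ ≤ k*(θ*(I₀p + 2*lam*I₀a + lam^2*I₀e) + τ*(I₁p + 2*lam*I₁a + lam^2*I₁e)) := h
      _ = θ*(k*I₀p + 2*lam*(k*I₀a) + lam^2*(k*I₀e))
            + τ*(k*I₁p + 2*lam*(k*I₁a) + lam^2*(k*I₁e)) := by ring
  have k0 := key2 I₀a I₀e he₀
  have k1 := key2 I₁a I₁e he₁
  have k0' := mul_le_mul_of_nonneg_left k0 hθ
  have k1' := mul_le_mul_of_nonneg_left k1 hτ
  calc k*Iθp + (k*Iθa)^2/(c - k*Iθe)
      = (k*Iθp + 2*lam*(k*Iθa) + lam^2*(k*Iθe)) - lam^2*c := by rw [key1]; ring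
    _ ≤ (θ*(k*I₀p + 2*lam*(k*I₀a) + lam^2*(k*I₀e))
          + τ*(k*I₁p + 2*lam*(k*I₁a) + lam^2*(k*I₁e))) - lam^2*c := by linarith
    _ = θ*(k*I₀p + (2*lam*(k*I₀a) - lam^2*(c - k*I₀e)))
          + τ*(k*I₁p + (2*lam*(k*I₁a) - lam^2*(c - k*I₁e))) := by
        linear_combination (lam^2*c) * hθτ
    _ ≤ θ*(k*I₀p + (k*I₀a)^2/(c - k*I₀e)) + τ*(k*I₁p + (k*I₁a)^2/(c - k*I₁e)) := by
        nlinarith [k0', k1']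

/-- Theorem 2 of the paper: the domain `Θ_Q` is convex and the functional
`φ(Q) = ‖L + AQ + B‖₂² + ‖(AQ+B)(EQ+F)‖₁²/(c − ‖EQ+F‖₂²)` is convex on it. -/
theorem stmt_8 (c : ℝ) (hc : 0 < c) (A B E F L : ℝ → ℂ)
    (hA : ContinuousOn A (Set.Icc (-π) π)) (hB : ContinuousOn B (Set.Icc (-π) π))
    (hE : ContinuousOn E (Set.Icc (-π) π)) (hF : ContinuousOn F (Set.Icc (-π) π))
    (hL : ContinuousOn L (Set.Icc (-π) π)) :
    Convex ℝ {Q : ℝ → ℂ | ContinuousOn Q (Set.Icc (-π) π) ∧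
        (1 / (2 * π)) * (∫ ω in (-π)..π, ‖E ω * Q ω + F ω‖ ^ 2) < c} ∧
    ConvexOn ℝ {Q : ℝ → ℂ | ContinuousOn Q (Set.Icc (-π) π) ∧
        (1 / (2 * π)) * (∫ ω in (-π)..π, ‖E ω * Q ω + F ω‖ ^ 2) < c}
      (fun Q => (1 / (2 * π)) * (∫ ω in (-π)..π, ‖L ω + A ω * Q ω + B ω‖ ^ 2) +
        ((1 / (2 * π)) * (∫ ω in (-π)..π,
            ‖A ω * Q ω + B ω‖ * ‖E ω * Q ω + F ω‖)) ^ 2 /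
          (c - (1 / (2 * π)) * (∫ ω in (-π)..π, ‖E ω * Q ω + F ω‖ ^ 2))) := by
  have hπ : (0:ℝ) < π := pi_pos
  have hle : -π ≤ π := by linarith
  have hk : (0:ℝ) < 1/(2*π) := by positivity
  have contZ : ∀ {Q : ℝ → ℂ}, ContinuousOn Q (Set.Icc (-π) π) →
      ContinuousOn (fun ω => ‖A ω * Q ω + B ω‖) (Set.Icc (-π) π) :=
    fun hQ => continuous_norm.comp_continuousOn ((hA.mul hQ).add hB)
  have contW : ∀ {Q : ℝ → ℂ}, ContinuousOn Q (Set.Icc (-π) π) →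
      ContinuousOn (fun ω => ‖E ω * Q ω + F ω‖) (Set.Icc (-π) π) :=
    fun hQ => continuous_norm.comp_continuousOn ((hE.mul hQ).add hF)
  have contP : ∀ {Q : ℝ → ℂ}, ContinuousOn Q (Set.Icc (-π) π) →
      ContinuousOn (fun ω => ‖L ω + A ω * Q ω + B ω‖) (Set.Icc (-π) π) :=
    fun hQ => continuous_norm.comp_continuousOn ((hL.add (hA.mul hQ)).add hB)
  have hdom : Convex ℝ {Q : ℝ → ℂ | ContinuousOn Q (Set.Icc (-π) π) ∧
      (1 / (2 * π)) * (∫ ω in (-π)..π, ‖E ω * Q ω + F ω‖ ^ 2) < c} := by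
    intro Q₀ h₀ Q₁ h₁ θ τ hθ hτ hθτ
    obtain ⟨hQ₀, he₀⟩ := h₀
    obtain ⟨hQ₁, he₁⟩ := h₁
    have hQθ : ContinuousOn (θ • Q₀ + τ • Q₁) (Set.Icc (-π) π) :=
      (hQ₀.const_smul θ).add (hQ₁.const_smul τ)
    refine ⟨hQθ, ?_⟩
    have hmono : (∫ ω in (-π)..π, ‖E ω * (θ • Q₀ + τ • Q₁) ω + F ω‖ ^ 2)
        ≤ ∫ ω in (-π)..π, (θ * ‖E ω * Q₀ ω + F ω‖^2
            + τ * ‖E ω * Q₁ ω + F ω‖^2) := by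
      apply intervalIntegral.integral_mono_on hle (II ((contW hQθ).pow 2))
        (II ((continuousOn_const.mul ((contW hQ₀).pow 2)).add
          (continuousOn_const.mul ((contW hQ₁).pow 2))))
      intro ω hω
      simp only [Pi.add_apply, Pi.smul_apply, Complex.real_smul]
      exact wpt θ τ hθ hτ hθτ (E ω) (F ω) (Q₀ ω) (Q₁ ω)
    have hsplit : (∫ ω in (-π)..π, (θ * ‖E ω * Q₀ ω + F ω‖^2
          + τ * ‖E ω * Q₁ ω + F ω‖^2))
        = θ * (∫ ω in (-π)..π, ‖E ω * Q₀ ω + F ω‖^2)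
          + τ * (∫ ω in (-π)..π, ‖E ω * Q₁ ω + F ω‖^2) := by
      rw [intervalIntegral.integral_add ?_ ?_,
        intervalIntegral.integral_const_mul, intervalIntegral.integral_const_mul]
      · exact II (continuousOn_const.mul ((contW hQ₀).pow 2))
      · exact II (continuousOn_const.mul ((contW hQ₁).pow 2))
    have hcomb : (1/(2*π)) * (∫ ω in (-π)..π, ‖E ω * (θ • Q₀ + τ • Q₁) ω + F ω‖ ^ 2)
        ≤ θ * ((1/(2*π)) * (∫ ω in (-π)..π, ‖E ω * Q₀ ω + F ω‖^2))
          + τ * ((1/(2*π)) * (∫ ω in (-π)..π, ‖E ω * Q₁ ω + F ω‖^2)) := by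
      calc (1/(2*π)) * (∫ ω in (-π)..π, ‖E ω * (θ • Q₀ + τ • Q₁) ω + F ω‖ ^ 2)
          ≤ (1/(2*π)) * (∫ ω in (-π)..π, (θ * ‖E ω * Q₀ ω + F ω‖^2
              + τ * ‖E ω * Q₁ ω + F ω‖^2)) := mul_le_mul_of_nonneg_left hmono hk.le
        _ = _ := by rw [hsplit]; ring
    have hcc : θ*c + τ*c = c := by rw [← add_mul, hθτ, one_mul]
    rcases eq_or_lt_of_le hθ with h | h
    · obtain rfl : θ = 0 := h.symm
      obtain rfl : τ = 1 := by linarith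
      simp only [zero_mul, one_mul, zero_add] at hcomb
      linarith
    · have h1 := mul_lt_mul_of_pos_left he₀ h
      have h2 := mul_le_mul_of_nonneg_left he₁.le hτ
      linarith
  refine ⟨hdom, hdom, fun Q₀ h₀ Q₁ h₁ θ τ hθ hτ hθτ => ?_⟩
  have contG : ∀ (lam : ℝ) {Q : ℝ → ℂ}, ContinuousOn Q (Set.Icc (-π) π) →
      ContinuousOn (fun ω => ‖L ω + A ω * Q ω + B ω‖^2
        + 2*lam*(‖A ω * Q ω + B ω‖ * ‖E ω * Q ω + F ω‖)
        + lam^2 * ‖E ω * Q ω + F ω‖^2) (Set.Icc (-π) π) :=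
    fun lam {Q} hQ => (((contP hQ).pow 2).add
      (continuousOn_const.mul ((contZ hQ).mul (contW hQ)))).add
      (continuousOn_const.mul ((contW hQ).pow 2))
  have expand : ∀ (lam : ℝ) {Q : ℝ → ℂ}, ContinuousOn Q (Set.Icc (-π) π) →
      (∫ ω in (-π)..π, (‖L ω + A ω * Q ω + B ω‖^2
        + 2*lam*(‖A ω * Q ω + B ω‖ * ‖E ω * Q ω + F ω‖)
        + lam^2 * ‖E ω * Q ω + F ω‖^2))
      = (∫ ω in (-π)..π, ‖L ω + A ω * Q ω + B ω‖^2)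
        + 2*lam*(∫ ω in (-π)..π, ‖A ω * Q ω + B ω‖ * ‖E ω * Q ω + F ω‖)
        + lam^2*(∫ ω in (-π)..π, ‖E ω * Q ω + F ω‖^2) := by
    intro lam Q hQ
    rw [intervalIntegral.integral_add ?_ ?_,
      intervalIntegral.integral_add ?_ ?_,
      intervalIntegral.integral_const_mul, intervalIntegral.integral_const_mul]
    · exact II ((contP hQ).pow 2)
    · exact II (continuousOn_const.mul ((contZ hQ).mul (contW hQ)))
    · exact ((II ((contP hQ).pow 2))).add
        (II (continuousOn_const.mul ((contZ hQ).mul (contW hQ))))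
    · exact II (continuousOn_const.mul ((contW hQ).pow 2))
  obtain ⟨hQθc, heθ⟩ := hdom h₀ h₁ hθ hτ hθτ
  obtain ⟨hQ₀, he₀⟩ := h₀
  obtain ⟨hQ₁, he₁⟩ := h₁
  simp only [smul_eq_mul]
  have haθ : 0 ≤ ∫ ω in (-π)..π, ‖A ω * (θ • Q₀ + τ • Q₁) ω + B ω‖
      * ‖E ω * (θ • Q₀ + τ • Q₁) ω + F ω‖ :=
    intervalIntegral.integral_nonneg hle
      (fun ω _ => mul_nonneg (norm_nonneg _) (norm_nonneg _))
  refine combine c θ τ _ _ _ _ _ _ _ _ _ (1/(2*π)) hk hθ hτ hθτ haθ he₀ he₁ heθ ?_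
  intro lam hlam
  have hmono := intervalIntegral.integral_mono_on hle (II (contG lam hQθc))
    (II ((continuousOn_const.mul (contG lam hQ₀)).add (continuousOn_const.mul (contG lam hQ₁))))
    (fun ω _ => by
      simp only [Pi.add_apply, Pi.smul_apply, Complex.real_smul]
      exact ptwise' θ τ lam hθ hτ hθτ hlam (A ω) (B ω) (E ω) (F ω) (L ω) (Q₀ ω) (Q₁ ω))
  have hsplit : (∫ ω in (-π)..π,
        (θ * (‖L ω + A ω * Q₀ ω + B ω‖^2
          + 2*lam*(‖A ω * Q₀ ω + B ω‖ * ‖E ω * Q₀ ω + F ω‖)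
          + lam^2 * ‖E ω * Q₀ ω + F ω‖^2)
        + τ * (‖L ω + A ω * Q₁ ω + B ω‖^2
          + 2*lam*(‖A ω * Q₁ ω + B ω‖ * ‖E ω * Q₁ ω + F ω‖)
          + lam^2 * ‖E ω * Q₁ ω + F ω‖^2)))
      = θ * (∫ ω in (-π)..π, (‖L ω + A ω * Q₀ ω + B ω‖^2
          + 2*lam*(‖A ω * Q₀ ω + B ω‖ * ‖E ω * Q₀ ω + F ω‖)
          + lam^2 * ‖E ω * Q₀ ω + F ω‖^2))
        + τ * (∫ ω in (-π)..π, (‖L ω + A ω * Q₁ ω + B ω‖^2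
          + 2*lam*(‖A ω * Q₁ ω + B ω‖ * ‖E ω * Q₁ ω + F ω‖)
          + lam^2 * ‖E ω * Q₁ ω + F ω‖^2)) := by
    rw [intervalIntegral.integral_add ?_ ?_,
      intervalIntegral.integral_const_mul, intervalIntegral.integral_const_mul]
    · exact II (continuousOn_const.mul (contG lam hQ₀))
    · exact II (continuousOn_const.mul (contG lam hQ₁))
  calc (∫ ω in (-π)..π, ‖L ω + A ω * (θ • Q₀ + τ • Q₁) ω + B ω‖ ^ 2)
        + 2*lam*(∫ ω in (-π)..π, ‖A ω * (θ • Q₀ + τ • Q₁) ω + B ω‖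
            * ‖E ω * (θ • Q₀ + τ • Q₁) ω + F ω‖)
        + lam^2*(∫ ω in (-π)..π, ‖E ω * (θ • Q₀ + τ • Q₁) ω + F ω‖ ^ 2)
      = ∫ ω in (-π)..π, (‖L ω + A ω * (θ • Q₀ + τ • Q₁) ω + B ω‖^2
          + 2*lam*(‖A ω * (θ • Q₀ + τ • Q₁) ω + B ω‖
            * ‖E ω * (θ • Q₀ + τ • Q₁) ω + F ω‖)
          + lam^2 * ‖E ω * (θ • Q₀ + τ • Q₁) ω + F ω‖^2) :=
        (expand lam hQθc).symm
    _ ≤ _ := hmono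
    _ = _ := by simp only [Pi.add_apply, Pi.mul_apply]; rw [hsplit, expand lam hQ₀, expand lam hQ₁]
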